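/- Let G and G' be compact Hausdorff topological groups which are connected and locally path-connected, let Γ ≤ G and Γ' ≤ G' be finite central subgroups, and let p : G → G/Γ and p' : G' → G'/Γ' be the quotient homomorphisms. Let f : G/Γ → G'/Γ' and f' : G'/Γ' → G/Γ be continuous maps with f(1)=1 and f'(1)=1, and suppose there are homotopies h : [0,1] × (G/Γ) → G/Γ from the identity map to f'∘f, and h' : [0,1] × (G'/Γ') → G'/Γ' from the identity map to f∘f', with h_t(1)=1 and h'_t(1)=1 for all t ∈ [0,1]. Let f̃ : G → G' and f̃' : G' → G be continuous maps with p'∘f̃ = f∘p, p∘f̃' = f'∘p', f̃(1)=1, and f̃'(1)=1. Then: (i) f̃(cx) = f̃(c)·f̃(x) for all c ∈ Γ and x ∈ G, and f̃'(c'x') = f̃'(c')·f̃'(x') for all c' ∈ Γ' and x' ∈ G'; (ii) f̃ maps Γ isomorphically onto Γ', with inverse the restriction of f̃' to Γ'; (iii) f̃ is a Γ-equivariant homotopy equivalence (with respect to Γ and Γ') with homotopy inverse f̃'. -/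

import Mathlib

open unitInterval

/-- `f : G → G'` is a `Γ`-equivariant homotopy equivalence with specified homotopy inverse
`f' : G' → G` (with respect to the subgroups `Γ ≤ G` and `Γ' ≤ G'`). -/
def IsEquivariantHtpyEquivWith {G G' : Type*} [Group G] [TopologicalSpace G]
    [Group G'] [TopologicalSpace G'] (Γ : Subgroup G) (Γ' : Subgroup G')
    (f : G → G') (f' : G' → G) : Prop :=
  Continuous f ∧ Continuous f' ∧
  Set.BijOn f (Γ : Set G) (Γ' : Set G') ∧
  f 1 = 1 ∧ (∀ c ∈ Γ, ∀ x : G, f (c * x) = f c * f x) ∧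
  f' 1 = 1 ∧ (∀ c' ∈ Γ', ∀ x' : G', f' (c' * x') = f' c' * f' x') ∧
  (∃ h : C(I × G, G),
    (∀ x : G, h (0, x) = x) ∧ (∀ x : G, h (1, x) = f' (f x)) ∧
    (∀ t : I, ∀ c ∈ Γ, h (t, c) = c) ∧
    (∀ t : I, ∀ c ∈ Γ, ∀ x : G, h (t, c * x) = c * h (t, x))) ∧
  (∃ h' : C(I × G', G'),
    (∀ x' : G', h' (0, x') = x') ∧ (∀ x' : G', h' (1, x') = f (f' x')) ∧
    (∀ t : I, ∀ c' ∈ Γ', h' (t, c') = c') ∧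
    (∀ t : I, ∀ c' ∈ Γ', ∀ x' : G', h' (t, c' * x') = c' * h' (t, x')))


section Aux

/-- A continuous map into a T1 group, whose "difference" from another continuous map
lies in a finite subgroup, agrees with it everywhere once they agree somewhere. -/
theorem lift_unique_aux {X G : Type*} [TopologicalSpace X] [PreconnectedSpace X]
    [Group G] [TopologicalSpace G] [IsTopologicalGroup G] [T1Space G]
    (Γ : Subgroup G) (hfin : (Γ : Set G).Finite)
    {g₁ g₂ : X → G} (h₁ : Continuous g₁) (h₂ : Continuous g₂)
    (hmem : ∀ x, (g₁ x)⁻¹ * g₂ x ∈ Γ) (a : X) (ha : g₁ a = g₂ a) :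
    ∀ x, g₁ x = g₂ x := by
  set d : X → G := fun x => (g₁ x)⁻¹ * g₂ x with hd
  have hdc : Continuous d := (h₁.inv).mul h₂
  set S : Set X := d ⁻¹' {1} with hS
  have hSclosed : IsClosed S := IsClosed.preimage hdc isClosed_singleton
  have hScompl : Sᶜ = d ⁻¹' ((Γ : Set G) \ {1}) := by
    ext x
    simp only [Set.mem_compl_iff, Set.mem_preimage, Set.mem_singleton_iff, Set.mem_diff, hS]
    exact ⟨fun h => ⟨hmem x, h⟩, fun h => h.2⟩
  have hSopen : IsOpen S := by
    rw [← isClosed_compl_iff, hScompl]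
    exact IsClosed.preimage hdc ((hfin.subset Set.diff_subset).isClosed)
  have hSuniv : S = Set.univ := by
    apply IsClopen.eq_univ ⟨hSclosed, hSopen⟩
    exact ⟨a, by simp [hS, hd, ha]⟩
  intro x
  have hx : d x = 1 := by
    have : x ∈ S := hSuniv ▸ Set.mem_univ x
    simpa [hS] using this
  have := inv_mul_eq_one.mp hx
  exact this


/-- Existence of a local section of the quotient map near `1`. -/
theorem exists_local_section {G : Type*} [Group G] [TopologicalSpace G] [IsTopologicalGroup G]
    [T1Space G] (Γ : Subgroup G) [Γ.Normal] (hfin : (Γ : Set G).Finite) :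
    ∃ (W : Set (G ⧸ Γ)) (sec : G ⧸ Γ → G), IsOpen W ∧ (1 : G ⧸ Γ) ∈ W ∧ sec 1 = 1 ∧
      ContinuousOn sec W ∧ (∀ w ∈ W, (QuotientGroup.mk (sec w) : G ⧸ Γ) = w) := by
  classical
  -- Find an open `V ∋ 1` on which the quotient map is injective.
  have hU : IsOpen ((Γ : Set G) \ {1})ᶜ :=
    (hfin.subset Set.diff_subset).isClosed.isOpen_compl
  have h1U : (1 : G) ∈ ((Γ : Set G) \ {1})ᶜ := by simp
  have hcont : Continuous fun p : G × G => p.1⁻¹ * p.2 := continuous_fst.inv.mul continuous_snd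
  have hnhds : (fun p : G × G => p.1⁻¹ * p.2) ⁻¹' ((Γ : Set G) \ {1})ᶜ ∈ nhds ((1 : G), (1 : G)) := by
    apply hcont.continuousAt.preimage_mem_nhds
    simpa using hU.mem_nhds h1U
  obtain ⟨V₁, hV₁, V₂, hV₂, hV₁₂⟩ := mem_nhds_prod_iff.mp hnhds
  obtain ⟨U₁, hU₁sub, hU₁open, hU₁mem⟩ := mem_nhds_iff.mp hV₁
  obtain ⟨U₂, hU₂sub, hU₂open, hU₂mem⟩ := mem_nhds_iff.mp hV₂
  set V : Set G := U₁ ∩ U₂ with hVdef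
  have hVopen : IsOpen V := hU₁open.inter hU₂open
  have hV1 : (1 : G) ∈ V := ⟨hU₁mem, hU₂mem⟩
  -- injectivity of `mk` on `V`
  have hinj : ∀ a ∈ V, ∀ b ∈ V, (QuotientGroup.mk a : G ⧸ Γ) = QuotientGroup.mk b → a = b := by
    intro a ha b hb hab
    have hmem : a⁻¹ * b ∈ Γ := QuotientGroup.eq.mp hab
    have hnot : a⁻¹ * b ∉ (Γ : Set G) \ {1} := by
      have : (a, b) ∈ V₁ ×ˢ V₂ := ⟨hU₁sub ha.1, hU₂sub hb.2⟩
      exact hV₁₂ this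
    have : a⁻¹ * b = 1 := by
      by_contra hne
      exact hnot ⟨hmem, hne⟩
    have := inv_mul_eq_one.mp this
    exact this
  set W : Set (G ⧸ Γ) := QuotientGroup.mk '' V with hWdef
  have hWopen : IsOpen W := QuotientGroup.isOpenMap_coe V hVopen
  have hW1 : (1 : G ⧸ Γ) ∈ W := ⟨1, hV1, rfl⟩
  -- the section
  have hsec : ∀ w ∈ W, ∃ v ∈ V, (QuotientGroup.mk v : G ⧸ Γ) = w := by
    intro w hw; obtain ⟨v, hv, rfl⟩ := hw; exact ⟨v, hv, rfl⟩
  set sec : G ⧸ Γ → G := fun w =>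
    if hw : ∃ v ∈ V, (QuotientGroup.mk v : G ⧸ Γ) = w then hw.choose else 1 with hsecdef
  have hsecV : ∀ w ∈ W, sec w ∈ V ∧ (QuotientGroup.mk (sec w) : G ⧸ Γ) = w := by
    intro w hw
    have hex := hsec w hw
    simp only [hsecdef, dif_pos hex]
    exact ⟨hex.choose_spec.1, hex.choose_spec.2⟩
  have hsec1 : sec 1 = 1 := by
    have h := hsecV 1 hW1
    exact hinj _ h.1 _ hV1 (by simpa using h.2)
  refine ⟨W, sec, hWopen, hW1, hsec1, ?_, fun w hw => (hsecV w hw).2⟩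
  -- continuity of the section on `W`
  intro w₀ hw₀
  rw [ContinuousWithinAt]
  intro N hN
  obtain ⟨O, hOsub, hOopen, hOmem⟩ := mem_nhds_iff.mp hN
  have hkey : QuotientGroup.mk '' (O ∩ V) ∈ nhdsWithin w₀ W := by
    apply mem_nhdsWithin_of_mem_nhds
    apply (QuotientGroup.isOpenMap_coe _ (hOopen.inter hVopen)).mem_nhds
    exact ⟨sec w₀, ⟨hOmem, (hsecV w₀ hw₀).1⟩, (hsecV w₀ hw₀).2⟩
  apply Filter.mem_of_superset hkey
  rintro w ⟨v, ⟨hvO, hvV⟩, rfl⟩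
  have hwW : (QuotientGroup.mk v : G ⧸ Γ) ∈ W := ⟨v, hvV, rfl⟩
  have := hsecV _ hwW
  have hveq : sec (QuotientGroup.mk v) = v := hinj _ this.1 _ hvV this.2
  apply Set.mem_preimage.mpr
  apply hOsub
  rw [hveq]
  exact hvO

theorem telescope_prod {M : Type*} [Group M] (a : ℕ → M) (n : ℕ) :
    ((List.range n).map (fun j => (a j)⁻¹ * a (j + 1))).prod = (a 0)⁻¹ * a n := by
  induction n with
  | zero => simp
  | succ n ih => rw [List.range_succ, List.map_append, List.prod_append, ih]; simp [mul_assoc]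

/-- Homotopy lifting for the quotient `G → G ⧸ Γ` in the special situation needed. -/
theorem key_lift {G : Type*} [Group G] [TopologicalSpace G] [IsTopologicalGroup G]
    [CompactSpace G] [T2Space G] [ConnectedSpace G]
    (Γ : Subgroup G) [Γ.Normal] (hfin : (Γ : Set G).Finite)
    (W : Set (G ⧸ Γ)) (sec : G ⧸ Γ → G) (hWopen : IsOpen W) (hW1 : (1 : G ⧸ Γ) ∈ W)
    (hsec1 : sec 1 = 1) (hseccont : ContinuousOn sec W)
    (hsecmk : ∀ w ∈ W, (QuotientGroup.mk (sec w) : G ⧸ Γ) = w)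
    (h : C(I × (G ⧸ Γ), G ⧸ Γ)) (hh0 : ∀ x, h (0, x) = x) (hhone : ∀ t, h (t, 1) = 1)
    (F : G → G) (hFc : Continuous F) (hF1 : F 1 = 1)
    (hFlift : ∀ x : G, (QuotientGroup.mk (F x) : G ⧸ Γ) = h (1, QuotientGroup.mk x)) :
    ∃ H : C(I × G, G), (∀ x, H (0, x) = x) ∧ (∀ x, H (1, x) = F x) ∧
      (∀ t : I, ∀ c ∈ Γ, H (t, c) = c) ∧
      (∀ t : I, ∀ c ∈ Γ, ∀ x, H (t, c * x) = c * H (t, x)) := by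
  classical
  -- Step 1: a "Lebesgue number" `N` for the homotopy `h` with respect to `W`.
  obtain ⟨N, hNpos, hN⟩ : ∃ N : ℕ, 0 < N ∧ ∀ (t s : I) (z : G ⧸ Γ),
      |(t : ℝ) - (s : ℝ)| ≤ 1 / N → (h (s, z))⁻¹ * h (t, z) ∈ W := by
    set D : I × I × (G ⧸ Γ) → G ⧸ Γ := fun p => (h (p.2.1, p.2.2))⁻¹ * h (p.1, p.2.2) with hD
    have hDcont : Continuous D := by
      apply Continuous.mul
      · exact (h.continuous.comp (continuous_fst.comp continuous_snd |>.prodMk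
          (continuous_snd.comp continuous_snd))).inv
      · exact h.continuous.comp (continuous_fst.prodMk (continuous_snd.comp continuous_snd))
    set C : Set (I × I × (G ⧸ Γ)) := {p | D p ∉ W} with hC
    have hCclosed : IsClosed C := by
      have : C = (D ⁻¹' W)ᶜ := rfl
      rw [this]
      exact (hWopen.preimage hDcont).isClosed_compl
    have hCcompact : IsCompact C := hCclosed.isCompact
    rcases Set.eq_empty_or_nonempty C with hCe | hCne
    · refine ⟨1, one_pos, fun t s z _ => ?_⟩
      by_contra hmem
      exact Set.eq_empty_iff_forall_notMem.mp hCe (t, s, z) hmem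
    · set φ : I × I × (G ⧸ Γ) → ℝ := fun p => |(p.1 : ℝ) - (p.2.1 : ℝ)| with hφ
      have hφcont : Continuous φ :=
        ((continuous_subtype_val.comp continuous_fst).sub
          (continuous_subtype_val.comp (continuous_fst.comp continuous_snd))).abs
      obtain ⟨p₀, hp₀C, hp₀min⟩ := hCcompact.exists_isMinOn hCne hφcont.continuousOn
      have hδpos : 0 < φ p₀ := by
        rcases lt_or_eq_of_le (abs_nonneg ((p₀.1 : ℝ) - (p₀.2.1 : ℝ))) with hlt | heq
        · exact hlt
        · exfalso
          have ht : p₀.1 = p₀.2.1 := by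
            apply Subtype.ext
            have := heq.symm
            rw [abs_eq_zero, sub_eq_zero] at this
            exact this
          apply hp₀C
          show D p₀ ∈ W
          rw [hD]
          simp only [ht, inv_mul_cancel]
          exact hW1
      obtain ⟨n, hn⟩ := exists_nat_one_div_lt hδpos
      refine ⟨n + 1, Nat.succ_pos n, fun t s z hts => ?_⟩
      by_contra hmem
      have : φ p₀ ≤ φ (t, s, z) := hp₀min hmem
      rw [hφ] at this
      simp only at this
      have : φ p₀ ≤ 1 / ((n : ℝ) + 1) := le_trans this (by exact_mod_cast hts)
      linarith [hn]
  -- Step 2: subdivision times.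
  have hNne : (N : ℝ) ≠ 0 := Nat.cast_ne_zero.mpr hNpos.ne'
  have hNnn : (0:ℝ) < N := Nat.cast_pos.mpr hNpos
  set τ : ℕ → I → I := fun j t => ⟨min (t : ℝ) (j / N),
    ⟨le_min t.2.1 (by positivity), min_le_of_left_le t.2.2⟩⟩ with hτ
  have hτcont : ∀ j, Continuous fun t : I => τ j t := fun j =>
    Continuous.subtype_mk (continuous_subtype_val.min continuous_const) _
  have hτ0 : ∀ j, τ j 0 = 0 := by
    intro j
    apply Subtype.ext
    show min ((0:I) : ℝ) (j / N) = ((0:I) : ℝ)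
    rw [Set.Icc.coe_zero]
    exact min_eq_left (by positivity)
  have hτzero : ∀ t, τ 0 t = 0 := by
    intro t
    apply Subtype.ext
    show min (t : ℝ) (((0:ℕ):ℝ) / N) = ((0:I) : ℝ)
    rw [Nat.cast_zero, zero_div, Set.Icc.coe_zero]
    exact min_eq_right t.2.1
  have hτN : ∀ t, τ N t = t := by
    intro t
    apply Subtype.ext
    show min (t : ℝ) (N / N) = (t : ℝ)
    rw [div_self hNne]
    exact min_eq_left t.2.2
  have hτdiff : ∀ j (t : I), |((τ (j+1) t : I) : ℝ) - ((τ j t : I) : ℝ)| ≤ 1 / N := by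
    intro j t
    show |min (t:ℝ) ((↑(j+1)) / N) - min (t:ℝ) ((j:ℝ) / N)| ≤ 1 / N
    have hcast : ((↑(j+1) : ℝ)) = (j : ℝ) + 1 := by push_cast; ring
    rw [hcast]
    have hjj : ((j:ℝ)) / N ≤ ((j:ℝ) + 1) / N := by gcongr; linarith
    have hmono : min (t:ℝ) ((j:ℝ) / N) ≤ min (t:ℝ) (((j:ℝ)+1) / N) := min_le_min le_rfl hjj
    rw [abs_of_nonneg (by linarith)]
    rcases le_total (t:ℝ) ((j:ℝ)/N) with hc | hc
    · have h1 : min (t:ℝ) ((j:ℝ)/N) = (t:ℝ) := min_eq_left hc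
      have h2 : min (t:ℝ) (((j:ℝ)+1)/N) = (t:ℝ) := min_eq_left (le_trans hc hjj)
      rw [h1, h2]
      simp
    · have h1 : min (t:ℝ) ((j:ℝ)/N) = (j:ℝ)/N := min_eq_right hc
      have h2 : min (t:ℝ) (((j:ℝ)+1)/N) ≤ ((j:ℝ)+1)/N := min_le_right _ _
      rw [h1]
      have : ((j:ℝ)+1)/N - (j:ℝ)/N = 1/N := by field_simp; ring
      linarith
  -- Step 3: the partial-time evaluations of `h`.
  set A : ℕ → I × G → G ⧸ Γ :=
    fun j p => h (τ j p.1, QuotientGroup.mk p.2) with hA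
  have hAcont : ∀ j, Continuous (A j) := fun j =>
    h.continuous.comp (((hτcont j).comp continuous_fst).prodMk
      (QuotientGroup.continuous_mk.comp continuous_snd))
  have hAW : ∀ j (p : I × G), (A j p)⁻¹ * A (j+1) p ∈ W := fun j p =>
    hN (τ (j+1) p.1) (τ j p.1) (QuotientGroup.mk p.2) (hτdiff j p.1)
  -- Step 4: the lifted homotopy.
  set Hfun : I × G → G :=
    fun p => p.2 * ((List.range N).map fun j => sec ((A j p)⁻¹ * A (j+1) p)).prod with hHfun
  have hHcont : Continuous Hfun := by
    apply continuous_snd.mul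
    apply continuous_list_prod
    intro j _
    exact hseccont.comp_continuous ((hAcont j).inv.mul (hAcont (j+1))) (fun p => hAW j p)
  -- `Hfun` lifts `h`.
  have hHlift : ∀ p : I × G, (QuotientGroup.mk (Hfun p) : G ⧸ Γ) = h (p.1, QuotientGroup.mk p.2) := by
    intro p
    have : (QuotientGroup.mk (Hfun p) : G ⧸ Γ) = QuotientGroup.mk' Γ (Hfun p) := rfl
    rw [this, hHfun]
    simp only [map_mul, map_list_prod, List.map_map]
    have hmap : ((List.range N).map ((QuotientGroup.mk' Γ) ∘ fun j => sec ((A j p)⁻¹ * A (j+1) p)))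
        = (List.range N).map fun j => (A j p)⁻¹ * A (j+1) p := by
      apply List.map_congr_left
      intro j _
      show QuotientGroup.mk' Γ (sec ((A j p)⁻¹ * A (j+1) p)) = (A j p)⁻¹ * A (j+1) p
      exact hsecmk _ (hAW j p)
    rw [hmap, telescope_prod (fun j => A j p) N]
    have hA0 : A 0 p = QuotientGroup.mk p.2 := by
      rw [hA]; simp only [hτzero]; exact hh0 _
    have hAN : A N p = h (p.1, QuotientGroup.mk p.2) := by
      rw [hA]; simp only [hτN]
    rw [hA0, hAN, QuotientGroup.mk'_apply, mul_inv_cancel_left]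
  -- factors are trivial when the `A j p` do not depend on `j`.
  have hfactor1 : ∀ (p : I × G), (∀ j, A j p = A 0 p) →
      Hfun p = p.2 := by
    intro p hconst
    show p.2 * ((List.range N).map fun j => sec ((A j p)⁻¹ * A (j+1) p)).prod = p.2
    have : ((List.range N).map fun j => sec ((A j p)⁻¹ * A (j+1) p)).prod = 1 := by
      apply List.prod_eq_one
      intro y hy
      obtain ⟨j, _, rfl⟩ := List.mem_map.mp hy
      rw [hconst j, hconst (j+1), inv_mul_cancel]
      exact hsec1
    rw [this, mul_one]
  have hH0 : ∀ x, Hfun (0, x) = x := by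
    intro x
    apply hfactor1
    intro j
    show h (τ j 0, _) = h (τ 0 0, _)
    rw [hτ0 j, hτ0 0]
  have hHc : ∀ t : I, ∀ c ∈ Γ, Hfun (t, c) = c := by
    intro t c hc
    have hmkc : (QuotientGroup.mk c : G ⧸ Γ) = 1 := (QuotientGroup.eq_one_iff c).mpr hc
    apply hfactor1
    intro j
    show h (τ j t, QuotientGroup.mk c) = h (τ 0 t, QuotientGroup.mk c)
    rw [hmkc, hhone, hhone]
  have hHequi : ∀ t : I, ∀ c ∈ Γ, ∀ x, Hfun (t, c * x) = c * Hfun (t, x) := by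
    intro t c hc x
    have hmkc : (QuotientGroup.mk (c * x) : G ⧸ Γ) = QuotientGroup.mk x := by
      have h1 : (QuotientGroup.mk c : G ⧸ Γ) = 1 := (QuotientGroup.eq_one_iff c).mpr hc
      rw [QuotientGroup.mk_mul, h1, one_mul]
    have hAeq : ∀ j, A j (t, c * x) = A j (t, x) := by
      intro j
      show h (τ j t, QuotientGroup.mk (c * x)) = h (τ j t, QuotientGroup.mk x)
      rw [hmkc]
    show (c * x) * ((List.range N).map fun j => sec ((A j (t, c*x))⁻¹ * A (j+1) (t, c*x))).prod
        = c * ((x : G) * ((List.range N).map fun j => sec ((A j (t, x))⁻¹ * A (j+1) (t, x))).prod)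
    have : ((List.range N).map fun j => sec ((A j (t, c*x))⁻¹ * A (j+1) (t, c*x))).prod
        = ((List.range N).map fun j => sec ((A j (t, x))⁻¹ * A (j+1) (t, x))).prod := by
      congr 1
      apply List.map_congr_left
      intro j _
      rw [hAeq j, hAeq (j+1)]
    rw [this, mul_assoc]
  have hH1 : ∀ x, Hfun (1, x) = F x := by
    have := lift_unique_aux (X := G) Γ hfin
      (g₁ := fun x => Hfun (1, x)) (g₂ := F)
      (hHcont.comp (Continuous.prodMk continuous_const continuous_id)) hFc
      (fun x => by
        apply QuotientGroup.eq.mp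
        show (QuotientGroup.mk (Hfun (1, x)) : G ⧸ Γ) = QuotientGroup.mk (F x)
        rw [hHlift (1, x), hFlift x])
      1 (by rw [hF1]; exact hHc 1 1 (one_mem Γ))
    exact this
  exact ⟨⟨Hfun, hHcont⟩, hH0, hH1, hHc, hHequi⟩

end Aux

/-- Lifting a homotopy equivalence `G/Γ ≃ G'/Γ'` to a `Γ`-equivariant homotopy equivalence
`G → G'`, where `Γ`, `Γ'` are finite central subgroups of the compact Hausdorff connected
locally path-connected groups `G`, `G'`. -/
theorem lift_equivariant_htpy_equiv {G G' : Type*}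
    [Group G] [TopologicalSpace G] [IsTopologicalGroup G] [CompactSpace G] [T2Space G]
    [ConnectedSpace G] [LocallyPathConnectedSpace G]
    [Group G'] [TopologicalSpace G'] [IsTopologicalGroup G'] [CompactSpace G'] [T2Space G']
    [ConnectedSpace G'] [LocallyPathConnectedSpace G']
    (Γ : Subgroup G) (Γ' : Subgroup G') [Γ.Normal] [Γ'.Normal]
    (hcen : Γ ≤ Subgroup.center G) (hcen' : Γ' ≤ Subgroup.center G')
    (hfinΓ : (Γ : Set G).Finite) (hfinΓ' : (Γ' : Set G').Finite)
    (f : G ⧸ Γ → G' ⧸ Γ') (f' : G' ⧸ Γ' → G ⧸ Γ)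
    (hfc : Continuous f) (hf'c : Continuous f')
    (hf1 : f 1 = 1) (hf'1 : f' 1 = 1)
    (h : C(I × (G ⧸ Γ), G ⧸ Γ))
    (hh0 : ∀ x, h (0, x) = x) (hh1 : ∀ x, h (1, x) = f' (f x))
    (hhone : ∀ t : I, h (t, 1) = 1)
    (h' : C(I × (G' ⧸ Γ'), G' ⧸ Γ'))
    (hh'0 : ∀ x', h' (0, x') = x') (hh'1 : ∀ x', h' (1, x') = f (f' x'))
    (hh'one : ∀ t : I, h' (t, 1) = 1)
    (ft : G → G') (ft' : G' → G) (hftc : Continuous ft) (hft'c : Continuous ft')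
    (hlift : ∀ x : G, QuotientGroup.mk' Γ' (ft x) = f (QuotientGroup.mk' Γ x))
    (hlift' : ∀ x' : G', QuotientGroup.mk' Γ (ft' x') = f' (QuotientGroup.mk' Γ' x'))
    (hft1 : ft 1 = 1) (hft'1 : ft' 1 = 1) :
    -- (i) equivariance of the lifts:
    (∀ c ∈ Γ, ∀ x : G, ft (c * x) = ft c * ft x) ∧
    (∀ c' ∈ Γ', ∀ x' : G', ft' (c' * x') = ft' c' * ft' x') ∧
    -- (ii) `ft` maps `Γ` isomorphically onto `Γ'`, with inverse the restriction of `ft'`: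
    Set.BijOn ft (Γ : Set G) (Γ' : Set G') ∧
    (∀ c ∈ Γ, ft' (ft c) = c) ∧ (∀ c' ∈ Γ', ft (ft' c') = c') ∧
    -- (iii) `ft` is a `Γ`-equivariant homotopy equivalence with homotopy inverse `ft'`:
    IsEquivariantHtpyEquivWith Γ Γ' ft ft' := by
  classical
  -- membership of images of `Γ` resp. `Γ'` under the lifts
  have hmkone : ∀ c ∈ Γ, (QuotientGroup.mk c : G ⧸ Γ) = 1 :=
    fun c hc => (QuotientGroup.eq_one_iff c).mpr hc
  have hmkone' : ∀ c' ∈ Γ', (QuotientGroup.mk c' : G' ⧸ Γ') = 1 :=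
    fun c hc => (QuotientGroup.eq_one_iff c).mpr hc
  have hftΓ : ∀ c ∈ Γ, ft c ∈ Γ' := by
    intro c hc
    apply (QuotientGroup.eq_one_iff (ft c)).mp
    rw [← QuotientGroup.mk'_apply, hlift c, QuotientGroup.mk'_apply, hmkone c hc, hf1]
  have hft'Γ : ∀ c' ∈ Γ', ft' c' ∈ Γ := by
    intro c hc
    apply (QuotientGroup.eq_one_iff (ft' c)).mp
    rw [← QuotientGroup.mk'_apply, hlift' c, QuotientGroup.mk'_apply, hmkone' c hc, hf'1]
  -- (i) equivariance of `ft`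
  have heq : ∀ c ∈ Γ, ∀ x : G, ft (c * x) = ft c * ft x := by
    intro c hc
    apply lift_unique_aux (X := G) Γ' hfinΓ'
      (g₁ := fun x => ft (c * x)) (g₂ := fun x => ft c * ft x)
      (hftc.comp (continuous_const.mul continuous_id)) (continuous_const.mul hftc)
      ?_ 1 (by show ft (c * 1) = ft c * ft 1; rw [mul_one, hft1, mul_one])
    intro x
    apply QuotientGroup.eq.mp
    have hc1 : QuotientGroup.mk' Γ c = 1 := by
      rw [QuotientGroup.mk'_apply]; exact hmkone c hc
    have hftc1 : QuotientGroup.mk' Γ' (ft c) = 1 := by rw [hlift c, hc1, hf1]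
    show (QuotientGroup.mk' Γ' (ft (c * x)) : G' ⧸ Γ') = QuotientGroup.mk' Γ' (ft c * ft x)
    calc QuotientGroup.mk' Γ' (ft (c * x)) = f (QuotientGroup.mk' Γ (c * x)) := hlift _
      _ = f (QuotientGroup.mk' Γ c * QuotientGroup.mk' Γ x) := by rw [map_mul]
      _ = f (QuotientGroup.mk' Γ x) := by rw [hc1, one_mul]
      _ = QuotientGroup.mk' Γ' (ft x) := (hlift x).symm
      _ = QuotientGroup.mk' Γ' (ft c) * QuotientGroup.mk' Γ' (ft x) := by
          rw [hftc1, one_mul]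
      _ = QuotientGroup.mk' Γ' (ft c * ft x) := (map_mul _ _ _).symm
  have heq' : ∀ c' ∈ Γ', ∀ x' : G', ft' (c' * x') = ft' c' * ft' x' := by
    intro c hc
    apply lift_unique_aux (X := G') Γ hfinΓ
      (g₁ := fun x => ft' (c * x)) (g₂ := fun x => ft' c * ft' x)
      (hft'c.comp (continuous_const.mul continuous_id)) (continuous_const.mul hft'c)
      ?_ 1 (by show ft' (c * 1) = ft' c * ft' 1; rw [mul_one, hft'1, mul_one])
    intro x
    apply QuotientGroup.eq.mp
    have hc1 : QuotientGroup.mk' Γ' c = 1 := by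
      rw [QuotientGroup.mk'_apply]; exact hmkone' c hc
    have hftc1 : QuotientGroup.mk' Γ (ft' c) = 1 := by rw [hlift' c, hc1, hf'1]
    show (QuotientGroup.mk' Γ (ft' (c * x)) : G ⧸ Γ) = QuotientGroup.mk' Γ (ft' c * ft' x)
    calc QuotientGroup.mk' Γ (ft' (c * x)) = f' (QuotientGroup.mk' Γ' (c * x)) := hlift' _
      _ = f' (QuotientGroup.mk' Γ' c * QuotientGroup.mk' Γ' x) := by rw [map_mul]
      _ = f' (QuotientGroup.mk' Γ' x) := by rw [hc1, one_mul]
      _ = QuotientGroup.mk' Γ (ft' x) := (hlift' x).symm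
      _ = QuotientGroup.mk' Γ (ft' c) * QuotientGroup.mk' Γ (ft' x) := by
          rw [hftc1, one_mul]
      _ = QuotientGroup.mk' Γ (ft' c * ft' x) := (map_mul _ _ _).symm
  -- the lifted homotopies
  obtain ⟨W, sec, hWo, hW1, hsec1, hsecc, hsecmk⟩ := exists_local_section Γ hfinΓ
  have hFl : ∀ x : G, (QuotientGroup.mk (ft' (ft x)) : G ⧸ Γ) = h (1, QuotientGroup.mk x) := by
    intro x
    show (QuotientGroup.mk' Γ (ft' (ft x)) : G ⧸ Γ) = h (1, QuotientGroup.mk' Γ x)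
    rw [hlift' (ft x), hlift x, ← hh1]
  obtain ⟨H, hH0, hH1, hHc, hHe⟩ := key_lift Γ hfinΓ W sec hWo hW1 hsec1 hsecc hsecmk
    h hh0 hhone (fun x => ft' (ft x)) (hft'c.comp hftc)
    (by show ft' (ft 1) = 1; rw [hft1, hft'1]) hFl
  obtain ⟨W', sec', hW'o, hW'1, hsec'1, hsec'c, hsec'mk⟩ := exists_local_section Γ' hfinΓ'
  have hF'l : ∀ x : G', (QuotientGroup.mk (ft (ft' x)) : G' ⧸ Γ') = h' (1, QuotientGroup.mk x) := by
    intro x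
    show (QuotientGroup.mk' Γ' (ft (ft' x)) : G' ⧸ Γ') = h' (1, QuotientGroup.mk' Γ' x)
    rw [hlift (ft' x), hlift' x, ← hh'1]
  obtain ⟨H', hH'0, hH'1, hH'c, hH'e⟩ := key_lift Γ' hfinΓ' W' sec' hW'o hW'1 hsec'1 hsec'c hsec'mk
    h' hh'0 hh'one (fun x => ft (ft' x)) (hftc.comp hft'c)
    (by show ft (ft' 1) = 1; rw [hft'1, hft1]) hF'l
  -- (ii)
  have hinv : ∀ c ∈ Γ, ft' (ft c) = c := by
    intro c hc
    have h1 : H (1, c) = ft' (ft c) := hH1 c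
    have h2 : H (1, c) = c := hHc 1 c hc
    rw [← h1, h2]
  have hinv' : ∀ c' ∈ Γ', ft (ft' c') = c' := by
    intro c hc
    have h1 : H' (1, c) = ft (ft' c) := hH'1 c
    have h2 : H' (1, c) = c := hH'c 1 c hc
    rw [← h1, h2]
  have hbij : Set.BijOn ft (Γ : Set G) (Γ' : Set G') := by
    refine ⟨fun c hc => hftΓ c hc, fun c₁ h₁ c₂ h₂ hf => ?_, fun c' hc' => ?_⟩
    · rw [← hinv c₁ h₁, ← hinv c₂ h₂, hf]
    · exact ⟨ft' c', hft'Γ c' hc', hinv' c' hc'⟩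
  refine ⟨heq, heq', hbij, hinv, hinv', hftc, hft'c, hbij, hft1, heq, hft'1, heq',
    ⟨H, hH0, hH1, hHc, hHe⟩, ⟨H', hH'0, hH'1, hH'c, hH'e⟩⟩
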